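/- For each θ = (θ₁,θ₂) ∈ [0,2π)², the 3×3 Hermitian matrix Δ_θ = (1/4)·[[4, -1-e^{-iθ₂}, -e^{-iθ₁}-e^{-iθ₂}], [-1-e^{iθ₂}, 4, -1-e^{-iθ₁}], [-e^{iθ₁}-e^{iθ₂}, -1-e^{iθ₁}, 4]] has characteristic polynomial p(μ) = (μ - 3/2)((μ - 3/4)² - (3+2κ)/16), where κ = cos θ₁ + cos θ₂ + cos(θ₁-θ₂). -/
import Mathlib


open Complex

/-- The Floquet (θ-equivariant) combinatorial Laplacian of the Kagome lattice on a
combinatorial fundamental domain of three vertices. -/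
noncomputable def kagomeFloquet (θ₁ θ₂ : ℝ) : Matrix (Fin 3) (Fin 3) ℂ :=
  (1 / 4 : ℂ) •
    !![4, -1 - exp (-I * θ₂), -exp (-I * θ₁) - exp (-I * θ₂);
       -1 - exp (I * θ₂), 4, -1 - exp (-I * θ₁);
       -exp (I * θ₁) - exp (I * θ₂), -1 - exp (I * θ₁), 4]

set_option maxHeartbeats 1600000

/-- For each `θ ∈ [0,2π)²`, the characteristic polynomial
`p(μ) = det(μ·I - Δ_θ)` of the Kagome Floquet matrix is
`(μ - 3/2)((μ - 3/4)² - (3+2κ)/16)` with `κ = cos θ₁ + cos θ₂ + cos(θ₁-θ₂)`. -/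
theorem kagomeFloquet_charpoly (θ₁ θ₂ : ℝ)
    (h₁ : θ₁ ∈ Set.Ico 0 (2 * Real.pi)) (h₂ : θ₂ ∈ Set.Ico 0 (2 * Real.pi)) :
    ∀ μ : ℝ,
      Matrix.det ((μ : ℂ) • (1 : Matrix (Fin 3) (Fin 3) ℂ) - kagomeFloquet θ₁ θ₂) =
        ((μ : ℂ) - 3 / 2) *
          (((μ : ℂ) - 3 / 4) ^ 2 -
            (3 + 2 * ((Real.cos θ₁ + Real.cos θ₂ + Real.cos (θ₁ - θ₂) : ℝ) : ℂ)) / 16) := by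
  intro μ
  have ea : exp (-I * θ₁) = (exp (I * θ₁))⁻¹ := by
    rw [← Complex.exp_neg]; ring_nf
  have eb : exp (-I * θ₂) = (exp (I * θ₂))⁻¹ := by
    rw [← Complex.exp_neg]; ring_nf
  have ha : exp (I * θ₁) ≠ 0 := Complex.exp_ne_zero _
  have hb : exp (I * θ₂) ≠ 0 := Complex.exp_ne_zero _
  have c1 : Complex.cos θ₁ = (exp (I * θ₁) + (exp (I * θ₁))⁻¹) / 2 := by
    rw [Complex.cos, ← Complex.exp_neg]; ring_nf
  have c2 : Complex.cos θ₂ = (exp (I * θ₂) + (exp (I * θ₂))⁻¹) / 2 := by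
    rw [Complex.cos, ← Complex.exp_neg]; ring_nf
  have c3 : Complex.cos ((θ₁ : ℂ) - θ₂) =
      (exp (I * θ₁) * (exp (I * θ₂))⁻¹ + (exp (I * θ₁))⁻¹ * exp (I * θ₂)) / 2 := by
    rw [Complex.cos, ← Complex.exp_neg, ← Complex.exp_neg,
      ← Complex.exp_add, ← Complex.exp_add]
    ring_nf
  simp only [kagomeFloquet, ea, eb, Matrix.smul_apply, Matrix.det_fin_three, Matrix.sub_apply,
    Matrix.smul_apply, Matrix.one_apply, Matrix.cons_val', Matrix.cons_val_zero,
    Matrix.cons_val_one, Matrix.head_cons, Matrix.head_fin_const, Matrix.cons_val_fin_one,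
    Matrix.empty_val', Matrix.cons_val_two, Matrix.tail_cons, Matrix.of_apply]
  push_cast
  rw [c1, c2, c3]
  simp only [smul_eq_mul]
  norm_num
  obtain ⟨a', hae, haa⟩ : ∃ x, (exp (I * (θ₁ : ℂ)))⁻¹ = x ∧ exp (I * (θ₁ : ℂ)) * x = 1 :=
    ⟨_, rfl, mul_inv_cancel₀ ha⟩
  obtain ⟨b', hbe, hbb⟩ : ∃ x, (exp (I * (θ₂ : ℂ)))⁻¹ = x ∧ exp (I * (θ₂ : ℂ)) * x = 1 :=
    ⟨_, rfl, mul_inv_cancel₀ hb⟩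
  rw [hae, hbe]
  linear_combination (5 / 32 - (μ : ℂ) / 8 + b' / 64 + exp (I * (θ₂ : ℂ)) / 64) * haa +
    (5 / 32 - (μ : ℂ) / 8 + a' / 64 + exp (I * (θ₁ : ℂ)) / 64) * hbb
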